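/- (Characterization Theorem.) Suppose a tie-strength measure TS satisfies: the isomorphism axiom; the baseline (TS(∅,u,v) = 0 and TS({{u,v}}, u, v) = 1); the frequency axiom; the intimacy axiom; the larger-events axiom; conditional independence of vertices; conditional independence of events (there is a function g₂ : ℝ × ℝ → ℝ, monotone in each argument, with TS(G + {P}, u, v) = g₂(TS(G,u,v), TS({P},u,v)) for every log G and event P); and submodularity (TS(G + {Q}, u, v) ≤ TS(G, u, v) + TS({Q}, u, v)). Then there exist a function h : ℕ → ℝ, antitone on {2,3,…} with 1/C(n,2) ≤ h(n) ≤ 1 for all n ≥ 2, and a function g : List ℝ → ℝ that is monotone (g(l ++ l') ≥ g(l), and g is pointwise monotone on lists of equal length) and submodular (g(l ++ [x]) ≤ g(l) + x for x in the range of h), such that for every event log G and distinct u, v: TS(G, u, v) = g(h(|P_1|), …, h(|P_k|)), where P_1, …, P_k are the events of G attended by both u and v. -/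

import Mathlib

section Helpers

variable {V : Type*} [DecidableEq V]

lemma exists_perm_image' (n : ℕ) : ∀ (A B : Finset V), A.card = B.card → (A \ B).card = n →
    ∃ σ : Equiv.Perm V, A.image σ = B ∧ ∀ x, x ∉ A ∪ B → σ x = x := by
  induction n with
  | zero =>
    intro A B hc hd
    have hAB : A = B := Finset.eq_of_subset_of_card_le
      (by rwa [← Finset.sdiff_eq_empty_iff_subset, ← Finset.card_eq_zero]) hc.ge
    exact ⟨Equiv.refl V, by simp [hAB], fun x _ => rfl⟩
  | succ n ih =>
    intro A B hc hd
    have hA : (A \ B).Nonempty := Finset.card_pos.mp (by omega)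
    obtain ⟨a, ha⟩ := hA
    have hB : (B \ A).Nonempty := by
      rw [← Finset.card_pos, ← Finset.card_sdiff_comm hc]; omega
    obtain ⟨b, hb⟩ := hB
    have haA : a ∈ A := (Finset.mem_sdiff.mp ha).1
    have haB : a ∉ B := (Finset.mem_sdiff.mp ha).2
    have hbB : b ∈ B := (Finset.mem_sdiff.mp hb).1
    have hbA : b ∉ A := (Finset.mem_sdiff.mp hb).2
    set A' := insert b (A.erase a) with hA'
    have hab : a ≠ b := fun h => hbA (h ▸ haA)
    have hcard' : A'.card = B.card := by
      rw [hA', Finset.card_insert_of_notMem (fun h => hbA (Finset.mem_of_mem_erase h)),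
        Finset.card_erase_of_mem haA]
      have : 1 ≤ A.card := Finset.card_pos.mpr ⟨a, haA⟩
      omega
    have hdiff' : (A' \ B).card = n := by
      have : A' \ B = (A \ B).erase a := by
        ext x
        simp only [hA', Finset.mem_sdiff, Finset.mem_insert, Finset.mem_erase]
        constructor
        · rintro ⟨hx | ⟨hxa, hxA⟩, hxB⟩
          · exact absurd (hx ▸ hbB) hxB
          · exact ⟨hxa, hxA, hxB⟩
        · rintro ⟨hxa, hxA, hxB⟩
          exact ⟨Or.inr ⟨hxa, hxA⟩, hxB⟩
      rw [this, Finset.card_erase_of_mem ha, hd]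
      omega
    obtain ⟨σ', hσ'1, hσ'2⟩ := ih A' B hcard' hdiff'
    refine ⟨(Equiv.swap a b).trans σ', ?_, ?_⟩
    · have himg : A.image (Equiv.swap a b) = A' := by
        nth_rewrite 1 [← Finset.insert_erase haA]
        rw [Finset.image_insert, Equiv.swap_apply_left, hA']
        congr 1
        refine Finset.image_congr (fun x hx => ?_) |>.trans (Finset.image_id)
        simp only [Finset.mem_coe, Finset.mem_erase] at hx
        exact Equiv.swap_apply_of_ne_of_ne hx.1 (fun h => hbA (h ▸ hx.2))
      rw [← hσ'1, ← himg, Finset.image_image]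
      rfl
    · intro x hx
      have hxa : x ≠ a := fun h => hx (Finset.mem_union_left _ (h ▸ haA))
      have hxb : x ≠ b := fun h => hx (Finset.mem_union_right _ (h ▸ hbB))
      have hxA' : x ∉ A' ∪ B := by
        intro hmem
        rcases Finset.mem_union.mp hmem with h | h
        · rcases Finset.mem_insert.mp h with h | h
          · exact hxb h
          · exact hx (Finset.mem_union_left _ (Finset.mem_of_mem_erase h))
        · exact hx (Finset.mem_union_right _ h)
      simp only [Equiv.trans_apply, Equiv.swap_apply_of_ne_of_ne hxa hxb]
      exact hσ'2 x hxA'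

lemma exists_perm_image (A B : Finset V) (hc : A.card = B.card) :
    ∃ σ : Equiv.Perm V, A.image σ = B ∧ ∀ x, x ∉ A ∪ B → σ x = x :=
  exists_perm_image' _ A B hc rfl

lemma exists_pair_perm (u v u' v' : V) (huv : u ≠ v) (huv' : u' ≠ v') :
    ∃ σ : Equiv.Perm V, σ u = u' ∧ σ v = v' := by
  set σ₁ := Equiv.swap u u'
  have h1 : σ₁ v ≠ u' := by
    intro h
    exact huv (σ₁.injective (by rw [h, Equiv.swap_apply_left])).symm
  refine ⟨σ₁.trans (Equiv.swap (σ₁ v) v'), ?_, ?_⟩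
  · have hu1 : σ₁ u = u' := Equiv.swap_apply_left u u'
    simp only [Equiv.trans_apply, hu1]
    exact Equiv.swap_apply_of_ne_of_ne h1.symm huv'
  · simp only [Equiv.trans_apply, Equiv.swap_apply_left]

lemma exists_full_perm (P P' : Finset V) (u v u' v' : V) (huv : u ≠ v) (huv' : u' ≠ v')
    (hu : u ∈ P) (hv : v ∈ P) (hu' : u' ∈ P') (hv' : v' ∈ P') (hc : P.card = P'.card) :
    ∃ σ : Equiv.Perm V, σ u = u' ∧ σ v = v' ∧ P.image σ = P' := by
  obtain ⟨σ₀, hσ₀u, hσ₀v⟩ := exists_pair_perm u v u' v' huv huv'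
  set P₀ := P.image σ₀ with hP₀
  have hc₀ : P₀.card = P'.card := by
    rw [hP₀, Finset.card_image_of_injective _ σ₀.injective, hc]
  have hu₀ : u' ∈ P₀ := hσ₀u ▸ Finset.mem_image_of_mem _ hu
  have hv₀ : v' ∈ P₀ := hσ₀v ▸ Finset.mem_image_of_mem _ hv
  set A := P₀ \ {u', v'} with hA
  set B := P' \ {u', v'} with hB
  have hpair : ({u', v'} : Finset V) ⊆ P₀ := by
    intro x hx; rcases Finset.mem_insert.mp hx with h | h
    · exact h ▸ hu₀
    · exact (Finset.mem_singleton.mp h) ▸ hv₀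
  have hpair' : ({u', v'} : Finset V) ⊆ P' := by
    intro x hx; rcases Finset.mem_insert.mp hx with h | h
    · exact h ▸ hu'
    · exact (Finset.mem_singleton.mp h) ▸ hv'
  have hcAB : A.card = B.card := by
    rw [hA, hB, Finset.card_sdiff_of_subset hpair, Finset.card_sdiff_of_subset hpair', hc₀]
  obtain ⟨τ, hτ1, hτ2⟩ := exists_perm_image A B hcAB
  have hτu : τ u' = u' := hτ2 u' (by simp [hA, hB])
  have hτv : τ v' = v' := hτ2 v' (by simp [hA, hB])
  refine ⟨σ₀.trans τ, by simp [Equiv.trans_apply, hσ₀u, hτu],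
    by simp [Equiv.trans_apply, hσ₀v, hτv], ?_⟩
  have himg : P.image (σ₀.trans τ) = P₀.image τ := by
    rw [hP₀, Finset.image_image]; rfl
  rw [himg]
  have hP₀eq : P₀ = A ∪ {u', v'} := by
    rw [hA, Finset.sdiff_union_of_subset hpair]
  rw [hP₀eq, Finset.image_union, hτ1]
  have hpimg : ({u', v'} : Finset V).image τ = {u', v'} := by
    rw [Finset.image_insert, Finset.image_singleton, hτu, hτv]
  rw [hpimg, hB, Finset.sdiff_union_of_subset hpair']

lemma singleton_iso (TS : Multiset (Finset V) → V → V → ℝ)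
    (hiso : ∀ (σ : Equiv.Perm V) (G : Multiset (Finset V)) (u v : V), u ≠ v →
      TS (G.map fun P => P.image σ) (σ u) (σ v) = TS G u v)
    (P P' : Finset V) (u v u' v' : V) (huv : u ≠ v) (huv' : u' ≠ v')
    (hu : u ∈ P) (hv : v ∈ P) (hu' : u' ∈ P') (hv' : v' ∈ P') (hc : P.card = P'.card) :
    TS {P} u v = TS {P'} u' v' := by
  obtain ⟨σ, hσu, hσv, hσP⟩ := exists_full_perm P P' u v u' v' huv huv' hu hv hu' hv' hc
  have key := hiso σ {P} u v huv
  rw [Multiset.map_singleton, hσP, hσu, hσv] at key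
  exact key.symm

lemma sublistForall₂_comp {α : Type*} {r : α → ℝ → Prop}
    (hcompat : ∀ a x y, r a x → x ≤ y → r a y) :
    ∀ {x y : List ℝ} {d : List α}, List.SublistForall₂ r d x →
      List.Forall₂ (· ≤ ·) x y → List.SublistForall₂ r d y := by
  intro x y d hdx hxy
  induction hxy generalizing d with
  | nil => cases hdx; exact List.SublistForall₂.nil
  | cons hab ht ih =>
    cases hdx with
    | nil => exact List.SublistForall₂.nil
    | cons h1 h2 => exact List.SublistForall₂.cons (hcompat _ _ _ h1 hab) (ih h2)
    | cons_right h' => exact List.SublistForall₂.cons_right (ih h')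

lemma sublistForall₂_concat {α : Type*} {r : α → ℝ → Prop} :
    ∀ {l : List ℝ} {x : ℝ} {d : List α}, List.SublistForall₂ r d (l ++ [x]) →
      List.SublistForall₂ r d l ∨
        ∃ d₁ P, d = d₁ ++ [P] ∧ r P x ∧ List.SublistForall₂ r d₁ l := by
  intro l
  induction l with
  | nil =>
    intro x d hd
    cases hd with
    | nil => exact Or.inl List.SublistForall₂.nil
    | cons h1 h2 => cases h2; exact Or.inr ⟨[], _, rfl, h1, List.SublistForall₂.nil⟩
    | cons_right h' => cases h'; exact Or.inl List.SublistForall₂.nil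
  | cons a l' ih =>
    intro x d hd
    cases hd with
    | nil => exact Or.inl List.SublistForall₂.nil
    | cons h1 h2 =>
      rcases ih h2 with h | ⟨d₁, P, rfl, hr, hs⟩
      · exact Or.inl (List.SublistForall₂.cons h1 h)
      · exact Or.inr ⟨_ :: d₁, P, rfl, hr, List.SublistForall₂.cons h1 hs⟩
    | cons_right h' =>
      rcases ih h' with h | ⟨d₁, P, rfl, hr, hs⟩
      · exact Or.inl (List.SublistForall₂.cons_right h)
      · exact Or.inr ⟨d₁, P, rfl, hr, List.SublistForall₂.cons_right hs⟩

lemma exists_enum_of_map (s : List ℕ) : ∀ (D : Multiset (Finset V)),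
    D.map Finset.card = ↑s → ∃ d : List (Finset V), ↑d = D ∧ d.map Finset.card = s := by
  induction s with
  | nil =>
    intro D hD
    have hD0 : D = 0 := by
      have : Multiset.map Finset.card D = 0 := by simpa using hD
      exact Multiset.map_eq_zero.mp this
    exact ⟨[], by simp [hD0], by simp⟩
  | cons a s' ih =>
    intro D hD
    rw [← Multiset.cons_coe] at hD
    obtain ⟨P, hPD, hcard, herase⟩ := (Multiset.map_eq_cons _ _ _ _).2 hD
    obtain ⟨d', hd'c, hd'm⟩ := ih (D.erase P) herase
    refine ⟨P :: d', ?_, by simp [hd'm, hcard]⟩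
    rw [← Multiset.cons_coe, hd'c, Multiset.cons_erase hPD]

lemma sublist_sum_le : ∀ {l₁ l₂ : List ℝ}, l₁.Sublist l₂ → (∀ x ∈ l₂, 0 ≤ x) →
    l₁.sum ≤ l₂.sum := by
  intro l₁ l₂ h
  induction h with
  | slnil => intro _; simp
  | @cons l₁' l₂' a h ih =>
    intro h0
    simp only [List.sum_cons]
    have ha := h0 a List.mem_cons_self
    have := ih (fun x hx => h0 x (List.mem_cons_of_mem a hx))
    linarith
  | @cons_cons l₁' l₂' a h ih =>
    intro h0
    simp only [List.sum_cons]
    have := ih (fun x hx => h0 x (List.mem_cons_of_mem a hx))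
    linarith

end Helpers


/-- **Characterization Theorem.** If a tie-strength measure `TS` satisfies the
isomorphism axiom, the baseline, the frequency axiom, the intimacy axiom, the
larger-events axiom, conditional independence of vertices, conditional
independence of events, and submodularity, then there are functions
`h : ℕ → ℝ` (antitone on `{2,3,…}`, with `1/C(n,2) ≤ h n ≤ 1` for `n ≥ 2`) and
`g : List ℝ → ℝ` (monotone under appending, pointwise monotone on lists of
equal length, and submodular on values of `h`) such that for every event log
`G` and distinct `u, v`:
`TS G u v = g (h |P₁|, …, h |P_k|)` where `P₁, …, P_k` are the events of `G`
attended by both `u` and `v` (sizes listed in nondecreasing order). -/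
theorem tie_strength_characterization {V : Type*} [DecidableEq V]
    (TS : Multiset (Finset V) → V → V → ℝ)
    (hiso : ∀ (σ : Equiv.Perm V) (G : Multiset (Finset V)) (u v : V), u ≠ v →
      TS (G.map fun P => P.image σ) (σ u) (σ v) = TS G u v)
    (hbase0 : ∀ u v : V, u ≠ v → TS 0 u v = 0)
    (hbase1 : ∀ u v : V, u ≠ v → TS {({u, v} : Finset V)} u v = 1)
    (hfreq : ∀ (G : Multiset (Finset V)) (P : Finset V) (u v : V), u ≠ v →
      u ∈ P → v ∈ P → TS G u v ≤ TS (P ::ₘ G) u v)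
    (hint : ∀ (P : Finset V) (u v w : V), u ≠ v → u ∈ P → v ∈ P → w ∈ P →
      w ≠ u → w ≠ v → TS {P} u v ≤ TS {P.erase w} u v)
    (hlarger : ∀ P Q : Finset V, Q.card ≤ P.card →
      ∑ p ∈ Q.offDiag, TS {Q} p.1 p.2 ≤ ∑ p ∈ P.offDiag, TS {P} p.1 p.2)
    (hvert : ∀ (G : Multiset (Finset V)) (u v : V), u ≠ v →
      TS G u v = TS (G.filter fun P => u ∈ P) u v ∧
      TS G u v = TS (G.filter fun P => v ∈ P) u v)
    (hev : ∃ g₂ : ℝ → ℝ → ℝ, (∀ y, Monotone fun x => g₂ x y) ∧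
      (∀ x, Monotone fun y => g₂ x y) ∧
      ∀ (G : Multiset (Finset V)) (P : Finset V) (u v : V), u ≠ v →
        TS (P ::ₘ G) u v = g₂ (TS G u v) (TS {P} u v))
    (hsub : ∀ (G : Multiset (Finset V)) (Q : Finset V) (u v : V), u ≠ v →
      TS (Q ::ₘ G) u v ≤ TS G u v + TS {Q} u v) :
    ∃ (h : ℕ → ℝ) (g : List ℝ → ℝ),
      AntitoneOn h {n : ℕ | 2 ≤ n} ∧
      (∀ n : ℕ, 2 ≤ n → 1 / ((n : ℝ) * ((n : ℝ) - 1) / 2) ≤ h n ∧ h n ≤ 1) ∧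
      (∀ l l' : List ℝ, g l ≤ g (l ++ l')) ∧
      (∀ x y : List ℝ, List.Forall₂ (· ≤ ·) x y → g x ≤ g y) ∧
      (∀ (l : List ℝ) (x : ℝ), (∃ n : ℕ, h n = x) → g (l ++ [x]) ≤ g l + x) ∧
      (∀ (G : Multiset (Finset V)) (u v : V), u ≠ v →
        TS G u v =
          g ((((G.filter fun P => u ∈ P ∧ v ∈ P).map Finset.card).sort (· ≤ ·)).map h)) := by
  classical
  obtain ⟨g₂, hg₂l, hg₂r, hg₂e⟩ := hev
  by_cases hex : ∃ u v : V, u ≠ v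
  case neg =>
    refine ⟨fun _ => 1, fun _ => 0, fun a _ b _ _ => le_refl _, fun n hn => ⟨?_, le_refl _⟩,
      fun _ _ => le_refl _, fun _ _ _ => le_refl _, ?_, ?_⟩
    · have h2 : (2:ℝ) ≤ (n:ℝ) := by exact_mod_cast hn
      rw [div_le_one (by nlinarith)]
      nlinarith
    · rintro l x ⟨n, rfl⟩
      norm_num
    · intro G u v huv
      exact absurd ⟨u, v, huv⟩ hex
  case pos =>
  obtain ⟨u₀, v₀, h00⟩ := hex
  set R : ℕ → Prop := fun n => ∃ P : Finset V, u₀ ∈ P ∧ v₀ ∈ P ∧ P.card = n with hR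
  set h : ℕ → ℝ := fun n =>
    if hn : R n then TS {hn.choose} u₀ v₀
    else if n < 2 then 1 else 2 / ((n : ℝ) * ((n : ℝ) - 1)) with hh
  -- singletons take value h(card)
  have hsing : ∀ (P : Finset V) (u v : V), u ≠ v → u ∈ P → v ∈ P →
      TS {P} u v = h P.card := by
    intro P u v huv hu hv
    have hRn : R P.card := by
      obtain ⟨σ, hσu, hσv⟩ := exists_pair_perm u v u₀ v₀ huv h00
      exact ⟨P.image σ, hσu ▸ Finset.mem_image_of_mem _ hu,
        hσv ▸ Finset.mem_image_of_mem _ hv,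
        Finset.card_image_of_injective _ σ.injective⟩
    obtain ⟨hu₀, hv₀, hcard⟩ := hRn.choose_spec
    have : h P.card = TS {hRn.choose} u₀ v₀ := by
      rw [hh]; exact dif_pos hRn
    rw [this]
    exact singleton_iso TS hiso P hRn.choose u v u₀ v₀ huv h00 hu hv hu₀ hv₀ hcard.symm
  have hpair_card : ({u₀, v₀} : Finset V).card = 2 := by
    rw [Finset.card_insert_of_notMem (Finset.notMem_singleton.mpr h00), Finset.card_singleton]
  have h2 : h 2 = 1 := by
    have key := hsing {u₀, v₀} u₀ v₀ h00 (Finset.mem_insert_self _ _)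
      (Finset.mem_insert_of_mem (Finset.mem_singleton_self _))
    rw [hpair_card] at key
    rw [← key, hbase1 u₀ v₀ h00]
  have hRge2 : ∀ n, R n → 2 ≤ n := by
    rintro n ⟨P, hu, hv, hc⟩
    have hsubP : ({u₀, v₀} : Finset V) ⊆ P := by
      intro x hx; rcases Finset.mem_insert.mp hx with hx | hx
      · exact hx ▸ hu
      · exact (Finset.mem_singleton.mp hx) ▸ hv
    have := Finset.card_le_card hsubP
    rw [hpair_card, hc] at this
    exact this
  have hlow : ∀ n, R n → 2 / ((n : ℝ) * ((n : ℝ) - 1)) ≤ h n := by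
    rintro n hRn
    obtain ⟨P, hu, hv, hc⟩ := hRn
    have h2n : 2 ≤ n := hRge2 n ⟨P, hu, hv, hc⟩
    have key := hlarger P {u₀, v₀} (by rw [hpair_card, hc]; exact h2n)
    have htermL : ∀ p ∈ ({u₀, v₀} : Finset V).offDiag,
        TS {({u₀, v₀} : Finset V)} p.1 p.2 = 1 := by
      intro p hp
      obtain ⟨hp1, hp2, hp3⟩ := Finset.mem_offDiag.mp hp
      rw [hsing _ _ _ hp3 hp1 hp2, hpair_card, h2]
    have hL : ∑ p ∈ ({u₀, v₀} : Finset V).offDiag, TS {({u₀, v₀} : Finset V)} p.1 p.2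
        = 2 := by
      rw [Finset.sum_congr rfl htermL, Finset.sum_const, Finset.offDiag_card, hpair_card]
      norm_num
    have htermR : ∀ p ∈ P.offDiag, TS {P} p.1 p.2 = h n := by
      intro p hp
      obtain ⟨hp1, hp2, hp3⟩ := Finset.mem_offDiag.mp hp
      rw [hsing _ _ _ hp3 hp1 hp2, hc]
    have hRt : ∑ p ∈ P.offDiag, TS {P} p.1 p.2 = ((n * n - n : ℕ) : ℝ) * h n := by
      rw [Finset.sum_congr rfl htermR, Finset.sum_const, Finset.offDiag_card, hc,
        nsmul_eq_mul]
    rw [hL, hRt] at key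
    have hcast : ((n * n - n : ℕ) : ℝ) = (n : ℝ) * ((n : ℝ) - 1) := by
      have hnn : n ≤ n * n := Nat.le_mul_of_pos_left n (by omega)
      push_cast [hnn]
      ring
    rw [hcast] at key
    have hpos : (0 : ℝ) < (n : ℝ) * ((n : ℝ) - 1) := by
      have : (2 : ℝ) ≤ (n : ℝ) := by exact_mod_cast h2n
      nlinarith
    rw [div_le_iff₀ hpos]
    linarith [key]
  have hstep : ∀ n, 2 ≤ n → h (n + 1) ≤ h n := by
    intro n hn
    by_cases hR1 : R (n + 1)
    · obtain ⟨P, hu, hv, hc⟩ := hR1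
      have hcard3 : 2 < P.card := by omega
      have hex3 : (P \ {u₀, v₀}).Nonempty := by
        rw [← Finset.card_pos]
        have hsubP : ({u₀, v₀} : Finset V) ⊆ P := by
          intro x hx; rcases Finset.mem_insert.mp hx with hx | hx
          · exact hx ▸ hu
          · exact (Finset.mem_singleton.mp hx) ▸ hv
        rw [Finset.card_sdiff_of_subset hsubP, hpair_card]
        omega
      obtain ⟨w, hw⟩ := hex3
      have hwP : w ∈ P := (Finset.mem_sdiff.mp hw).1
      have hwuv : w ∉ ({u₀, v₀} : Finset V) := (Finset.mem_sdiff.mp hw).2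
      have hwu : w ≠ u₀ := fun he => hwuv (he ▸ Finset.mem_insert_self _ _)
      have hwv : w ≠ v₀ := fun he =>
        hwuv (he ▸ Finset.mem_insert_of_mem (Finset.mem_singleton_self _))
      have key := hint P u₀ v₀ w h00 hu hv hwP hwu hwv
      rw [hsing P u₀ v₀ h00 hu hv, hc] at key
      rw [hsing (P.erase w) u₀ v₀ h00 (Finset.mem_erase.mpr ⟨hwu.symm, hu⟩)
        (Finset.mem_erase.mpr ⟨hwv.symm, hv⟩), Finset.card_erase_of_mem hwP, hc] at key
      simpa using key
    · have hval1 : h (n + 1) = 2 / (((n:ℝ) + 1) * ((n:ℝ) + 1 - 1)) := by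
        rw [hh]
        simp only
        rw [dif_neg hR1, if_neg (by omega)]
        push_cast
        ring_nf
      rw [hval1]
      have hnR : (2:ℝ) ≤ (n:ℝ) := by exact_mod_cast hn
      have hq : 2 / (((n:ℝ) + 1) * ((n:ℝ) + 1 - 1)) ≤ 2 / ((n:ℝ) * ((n:ℝ) - 1)) := by
        apply div_le_div_of_nonneg_left (by norm_num) (by nlinarith)
        nlinarith
      by_cases hRn : R n
      · exact hq.trans (hlow n hRn)
      · have hvaln : h n = 2 / ((n:ℝ) * ((n:ℝ) - 1)) := by
          rw [hh]; simp only; rw [dif_neg hRn, if_neg (by omega)]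
        rw [hvaln]
        exact hq
  have hanti : AntitoneOn h {n : ℕ | 2 ≤ n} := by
    intro a ha b hb hab
    simp only [Set.mem_setOf_eq] at ha hb
    induction b, hab using Nat.le_induction with
    | base => exact le_refl _
    | succ n hn ih =>
      exact (hstep n (ha.trans hn)).trans (ih (by omega))
  have hub : ∀ n, 2 ≤ n → h n ≤ 1 := by
    intro n hn
    calc h n ≤ h 2 := hanti (by simp) (by simpa using hn) hn
      _ = 1 := h2
  have hbounds : ∀ n : ℕ, 2 ≤ n → 1 / ((n : ℝ) * ((n : ℝ) - 1) / 2) ≤ h n ∧ h n ≤ 1 := by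
    intro n hn
    refine ⟨?_, hub n hn⟩
    rw [one_div_div]
    by_cases hRn : R n
    · exact hlow n hRn
    · rw [hh]; simp only; rw [dif_neg hRn, if_neg (by omega)]
  have hpos : ∀ n, 0 ≤ h n := by
    intro n
    by_cases hn2 : 2 ≤ n
    · have := (hbounds n hn2).1
      have hnR : (2:ℝ) ≤ (n:ℝ) := by exact_mod_cast hn2
      have hdpos : (0:ℝ) < (n : ℝ) * ((n : ℝ) - 1) / 2 := by nlinarith
      have : (0:ℝ) < 1 / ((n : ℝ) * ((n : ℝ) - 1) / 2) := one_div_pos.mpr hdpos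
      linarith [(hbounds n hn2).1]
    · by_cases hRn : R n
      · exact absurd (hRge2 n hRn) hn2
      · rw [hh]; simp only; rw [dif_neg hRn, if_pos (by omega)]
        norm_num
  -- TS depends only on events containing both u and v
  have hTSf : ∀ (G : Multiset (Finset V)) (u v : V), u ≠ v →
      TS G u v = TS (G.filter fun P => u ∈ P ∧ v ∈ P) u v := by
    intro G u v huv
    have h1 := (hvert G u v huv).1
    have h2 := (hvert (G.filter fun P => u ∈ P) u v huv).2
    rw [h1, h2, Multiset.filter_filter]
    congr 1
    exact Multiset.filter_congr (fun P _ => and_comm)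
  -- monotonicity along Forall₂ on event lists
  have hmono2 : ∀ (d d' : List (Finset V)) (u v u' v' : V), u ≠ v → u' ≠ v' →
      (∀ P ∈ d, u ∈ P ∧ v ∈ P) → (∀ P ∈ d', u' ∈ P ∧ v' ∈ P) →
      List.Forall₂ (fun P Q => h P.card ≤ h Q.card) d d' →
      TS ↑d u v ≤ TS ↑d' u' v' := by
    intro d d' u v u' v' huv huv' hd hd' hrel
    induction hrel with
    | nil => simp [hbase0 u v huv, hbase0 u' v' huv']
    | @cons P Q d₁ d₂ hPQ htail ih =>
      rw [← Multiset.cons_coe, ← Multiset.cons_coe, hg₂e ↑d₁ P u v huv,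
        hg₂e ↑d₂ Q u' v' huv']
      have hPm := hd P List.mem_cons_self
      have hQm := hd' Q List.mem_cons_self
      rw [hsing P u v huv hPm.1 hPm.2, hsing Q u' v' huv' hQm.1 hQm.2]
      have hihval := ih (fun P hP => hd P (List.mem_cons_of_mem _ hP))
        (fun P hP => hd' P (List.mem_cons_of_mem _ hP))
      calc g₂ (TS ↑d₁ u v) (h P.card) ≤ g₂ (TS ↑d₂ u' v') (h P.card) := hg₂l _ hihval
        _ ≤ g₂ (TS ↑d₂ u' v') (h Q.card) := hg₂r _ hPQ
  -- adding events containing u,v increases TS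
  have hfreqM : ∀ (D E : Multiset (Finset V)) (u v : V), u ≠ v →
      (∀ P ∈ E, u ∈ P ∧ v ∈ P) → TS D u v ≤ TS (D + E) u v := by
    intro D E u v huv
    induction E using Multiset.induction with
    | empty => intro _; simp
    | cons P E' ih =>
      intro hE
      have hstep2 : D + P ::ₘ E' = P ::ₘ (D + E') := by
        rw [Multiset.add_cons]
      rw [hstep2]
      have hPm := hE P (Multiset.mem_cons_self _ _)
      exact (ih (fun Q hQ => hE Q (Multiset.mem_cons_of_mem hQ))).trans
        (hfreq (D + E') P u v huv hPm.1 hPm.2)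
  -- TS is at most the sum of the h-values
  have hsumB : ∀ (d : List (Finset V)) (u v : V), u ≠ v →
      (∀ P ∈ d, u ∈ P ∧ v ∈ P) → TS ↑d u v ≤ (d.map fun P => h P.card).sum := by
    intro d u v huv
    induction d with
    | nil => intro _; simp [hbase0 u v huv]
    | cons P d' ih =>
      intro hd
      have hPm := hd P List.mem_cons_self
      rw [← Multiset.cons_coe]
      calc TS (P ::ₘ ↑d') u v ≤ TS ↑d' u v + TS {P} u v := hsub ↑d' P u v huv
        _ ≤ (d'.map fun P => h P.card).sum + h P.card := by
            rw [hsing P u v huv hPm.1 hPm.2]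
            exact add_le_add_left (ih (fun Q hQ => hd Q (List.mem_cons_of_mem _ hQ))) _
        _ = ((P :: d').map fun P => h P.card).sum := by simp [add_comm]
  -- the function g
  set SetA : List ℝ → Set ℝ := fun l => {t : ℝ | ∃ d : List (Finset V),
    (∀ P ∈ d, u₀ ∈ P ∧ v₀ ∈ P) ∧
    List.SublistForall₂ (fun P x => h P.card ≤ x) d l ∧ t = TS ↑d u₀ v₀} with hSetA
  set g : List ℝ → ℝ := fun l => sSup (SetA l) with hg
  have h0A : ∀ l, (0:ℝ) ∈ SetA l := by
    intro l
    exact ⟨[], by simp, List.SublistForall₂.nil, by simp [hbase0 u₀ v₀ h00]⟩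
  have hbddA : ∀ l, BddAbove (SetA l) := by
    intro l
    refine ⟨(l.map fun x => max x 0).sum, ?_⟩
    rintro t ⟨d, hd, hrel, rfl⟩
    obtain ⟨l₀, hf, hsub₀⟩ := List.sublistForall₂_iff.mp hrel
    have h1 : TS ↑d u₀ v₀ ≤ (d.map fun P => h P.card).sum := hsumB d u₀ v₀ h00 hd
    have h2' : (d.map fun P => h P.card).sum ≤ l₀.sum :=
      List.Forall₂.sum_le_sum (List.forall₂_map_left_iff.mpr hf)
    have h3 : l₀.sum ≤ (l₀.map fun x => max x 0).sum := by
      refine List.Forall₂.sum_le_sum ?_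
      rw [List.forall₂_map_right_iff]
      exact List.forall₂_same.mpr (fun x _ => le_max_left x 0)
    have h4 : (l₀.map fun x => max x 0).sum ≤ (l.map fun x => max x 0).sum := by
      refine sublist_sum_le (List.Sublist.map _ hsub₀) ?_
      intro x hx
      obtain ⟨y, _, rfl⟩ := List.mem_map.mp hx
      exact le_max_right y 0
    exact h1.trans (h2'.trans (h3.trans h4))
  refine ⟨h, g, hanti, hbounds, ?_, ?_, ?_, ?_⟩
  · -- append monotonicity
    intro l l'
    refine csSup_le_csSup (hbddA _) ⟨0, h0A l⟩ ?_
    rintro t ⟨d, hd, hrel, rfl⟩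
    refine ⟨d, hd, ?_, rfl⟩
    obtain ⟨l₀, hf, hsub₀⟩ := List.sublistForall₂_iff.mp hrel
    exact List.sublistForall₂_iff.mpr ⟨l₀, hf, hsub₀.trans (List.sublist_append_left l l')⟩
  · -- pointwise monotonicity
    intro x y hxy
    refine csSup_le_csSup (hbddA _) ⟨0, h0A x⟩ ?_
    rintro t ⟨d, hd, hrel, rfl⟩
    exact ⟨d, hd, sublistForall₂_comp (fun P a b hab hle => hab.trans hle) hrel hxy, rfl⟩
  · -- submodularity
    rintro l x ⟨n, rfl⟩
    refine csSup_le ⟨0, h0A _⟩ ?_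
    rintro t ⟨d, hd, hrel, rfl⟩
    rcases sublistForall₂_concat hrel with hcase | ⟨d₁, P, rfl, hrP, hs₁⟩
    · have : TS ↑d u₀ v₀ ≤ g l := le_csSup (hbddA l) ⟨d, hd, hcase, rfl⟩
      linarith [hpos n]
    · have hco : (↑(d₁ ++ [P]) : Multiset (Finset V)) = P ::ₘ ↑d₁ := by
        simp
      rw [hco]
      have hPm := hd P (List.mem_append_right d₁ (List.mem_singleton_self P))
      have hd₁m : ∀ Q ∈ d₁, u₀ ∈ Q ∧ v₀ ∈ Q :=
        fun Q hQ => hd Q (List.mem_append_left _ hQ)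
      calc TS (P ::ₘ ↑d₁) u₀ v₀ ≤ TS ↑d₁ u₀ v₀ + TS {P} u₀ v₀ := hsub ↑d₁ P u₀ v₀ h00
        _ ≤ g l + h n := by
            have hmem : TS ↑d₁ u₀ v₀ ≤ g l := le_csSup (hbddA l) ⟨d₁, hd₁m, hs₁, rfl⟩
            rw [hsing P u₀ v₀ h00 hPm.1 hPm.2]
            exact add_le_add hmem hrP
  · -- representation
    intro G u v huv
    set D := G.filter (fun P => u ∈ P ∧ v ∈ P) with hD
    have hDm : ∀ P ∈ D, u ∈ P ∧ v ∈ P := fun P hP => (Multiset.mem_filter.mp hP).2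
    obtain ⟨dD, hdDc, hdDm⟩ := exists_enum_of_map ((D.map Finset.card).sort (· ≤ ·)) D
      (by rw [Multiset.sort_eq])
    have hdDmem : ∀ P ∈ dD, u ∈ P ∧ v ∈ P := by
      intro P hP
      exact hDm P (by rw [← hdDc]; exact hP)
    have hL : ((D.map Finset.card).sort (· ≤ ·)).map h = dD.map (fun P => h P.card) := by
      rw [← hdDm, List.map_map]
      rfl
    rw [hTSf G u v huv, ← hD, hL]
    obtain ⟨σ, hσu, hσv⟩ := exists_pair_perm u v u₀ v₀ huv h00
    apply le_antisymm
    · -- TS D u v ≤ g L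
      set d' := dD.map (Finset.image σ) with hd'
      have hval : TS ↑d' u₀ v₀ = TS D u v := by
        have : (↑d' : Multiset (Finset V)) = D.map (fun P => P.image σ) := by
          rw [hd', ← Multiset.map_coe, hdDc]
        rw [this, ← hσu, ← hσv]
        exact hiso σ D u v huv
      rw [← hval]
      refine le_csSup (hbddA _) ⟨d', ?_, ?_, rfl⟩
      · intro P' hP'
        obtain ⟨P, hP, rfl⟩ := List.mem_map.mp hP'
        exact ⟨hσu ▸ Finset.mem_image_of_mem _ (hdDmem P hP).1,
          hσv ▸ Finset.mem_image_of_mem _ (hdDmem P hP).2⟩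
      · refine List.sublistForall₂_iff.mpr ⟨dD.map (fun P => h P.card), ?_, List.Sublist.refl _⟩
        rw [hd', List.forall₂_map_right_iff, List.forall₂_map_left_iff]
        refine List.forall₂_same.mpr (fun P _ => ?_)
        rw [Finset.card_image_of_injective _ σ.injective]
    · -- g L ≤ TS D u v
      refine csSup_le ⟨0, h0A _⟩ ?_
      rintro t ⟨d, hd, hrel, rfl⟩
      obtain ⟨l₀, hf, hsl⟩ := List.sublistForall₂_iff.mp hrel
      obtain ⟨d₀, hd₀s, rfl⟩ := List.sublist_map_iff.mp hsl
      have hf' : List.Forall₂ (fun P Q => h P.card ≤ h Q.card) d d₀ :=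
        List.forall₂_map_right_iff.mp hf
      have hd₀mem : ∀ P ∈ d₀, u ∈ P ∧ v ∈ P := fun P hP => hdDmem P (hd₀s.subset hP)
      have hstep1 : TS ↑d u₀ v₀ ≤ TS ↑d₀ u v := hmono2 d d₀ u₀ v₀ u v h00 huv hd hd₀mem hf'
      have hle : (↑d₀ : Multiset (Finset V)) ≤ D := by
        rw [← hdDc]
        exact Multiset.coe_le.mpr hd₀s.subperm
      obtain ⟨E, hE⟩ := Multiset.le_iff_exists_add.mp hle
      have hEm : ∀ P ∈ E, u ∈ P ∧ v ∈ P := by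
        intro P hP
        exact hDm P (by rw [hE]; exact Multiset.mem_add.mpr (Or.inr hP))
      rw [hE]
      exact hstep1.trans (hfreqM ↑d₀ E u v huv hEm)
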